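/- Let $I$ be an ideal of a commutative ring whose symbolic Rees algebra has generation type $d$, meaning $I^{(n)} = \sum_{a_1 + 2a_2 + \cdots + d a_d = n} I^{a_1}(I^{(2)})^{a_2} \cdots (I^{(d)})^{a_d}$ for all $n \geq 1$. Then $I^{(dn - d + 1)} \subseteq I^n$ for all $n \geq 1$. -/

import Mathlib

/-- If the symbolic Rees algebra of `I` has generation type `d`, then
`I^{(dn-d+1)} ⊆ I^n` for all `n ≥ 1`. -/
theorem symbolicPower_le_pow_of_generation_type {R : Type*} [CommRing R]
    (I : Ideal R) (J : ℕ → Ideal R) (d : ℕ) (hd : 1 ≤ d)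
    (hJ1 : J 1 = I) (hsub : ∀ i : ℕ, 1 ≤ i → J i ≤ I)
    (hgen : ∀ n : ℕ, 1 ≤ n →
      J n = ⨆ (a : Fin d → ℕ) (_ : ∑ i : Fin d, (i.1 + 1) * a i = n),
              ∏ i : Fin d, J (i.1 + 1) ^ a i) :
    ∀ n : ℕ, 1 ≤ n → J (d * n - d + 1) ≤ I ^ n := by
  intro n hn
  rw [hgen (d * n - d + 1) (Nat.le_add_left 1 _)]
  apply iSup_le
  intro a
  apply iSup_le
  intro ha
  -- key: n ≤ ∑ a i
  have hsum : n ≤ ∑ i : Fin d, a i := by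
    by_contra h
    push_neg at h
    have h1 : ∑ i : Fin d, (i.1 + 1) * a i ≤ ∑ i : Fin d, d * a i :=
      Finset.sum_le_sum fun i _ => Nat.mul_le_mul_right _ i.2
    rw [← Finset.mul_sum] at h1
    have h2 : d * ∑ i : Fin d, a i ≤ d * (n - 1) :=
      Nat.mul_le_mul_left _ (Nat.le_sub_one_of_lt h)
    have h3 : d * n - d + 1 ≤ d * (n - 1) := le_trans (ha ▸ h1) h2
    rw [Nat.mul_sub_one] at h3
    omega
  have key : ∀ s : Finset (Fin d),
      ∏ i ∈ s, J (i.1 + 1) ^ a i ≤ I ^ (∑ i ∈ s, a i) := by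
    intro s
    induction s using Finset.induction_on with
    | empty => simp
    | insert x s hx ih =>
      rw [Finset.prod_insert hx, Finset.sum_insert hx, pow_add]
      exact Ideal.mul_mono
        (Ideal.pow_right_mono (hsub _ (Nat.le_add_left 1 _)) _) ih
  exact le_trans (key Finset.univ) (Ideal.pow_le_pow_right hsum)
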